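/- Let G be a finite group with center Z = Z(G), and let T be an abelian subgroup of G with Z ≤ T such that: (i) C_{G/Z}(tZ) ≤ T/Z for every t ∈ T \ Z; (ii) |T/Z| is odd and coprime to |Z|; (iii) writing π for the set of primes dividing |T/Z|, the group G/Z contains no element whose order is divisible both by a prime in π and by a prime not in π; (iv) every element of G/Z whose order is a product of primes in π lies in some conjugate of T/Z. Then for every g ∈ T \ Z, the conjugacy class size |g^G| = |G : T| is an isolated vertex of the divisibility graph D(G); that is, for every non-central x ∈ G with |x^G| ≠ |g^G|, neither of |x^G| and |g^G| divides the other. -/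

import Mathlib

private lemma card_conjClass_eq' {G : Type*} [Group G] (a : G) :
    Nat.card {y : G // IsConj a y} = (Subgroup.centralizer {a}).index := by
  have h1 : Nat.card {y : G // IsConj a y}
      = Nat.card (MulAction.orbit (ConjAct G) a) := by
    apply Nat.card_congr
    apply Equiv.subtypeEquivRight
    intro y
    rw [ConjAct.mem_orbit_conjAct]
    exact ⟨IsConj.symm, IsConj.symm⟩
  rw [h1, Subgroup.centralizer_eq_comap_stabilizer]
  erw [Subgroup.index_comap_of_surjective _ ConjAct.toConjAct.surjective]
  rw [Nat.card_congr (MulAction.orbitEquivQuotientStabilizer (ConjAct G) a)]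
  rfl

private lemma card_map_mk'' {G : Type*} [Group G] [Finite G] (N H : Subgroup G) [N.Normal]
    (hNH : N ≤ H) :
    Nat.card (H.map (QuotientGroup.mk' N)) * Nat.card N = Nat.card H := by
  set f := (QuotientGroup.mk' N).comp H.subtype with hf
  have hrange : f.range = H.map (QuotientGroup.mk' N) := by
    rw [hf, MonoidHom.range_comp, H.range_subtype]
  have hker : f.ker = N.subgroupOf H := by
    rw [hf, ← MonoidHom.comap_ker, QuotientGroup.ker_mk']; rfl
  have e := QuotientGroup.quotientKerEquivRange f
  have h1 : Nat.card (H.map (QuotientGroup.mk' N)) = Nat.card (H ⧸ N.subgroupOf H) := by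
    rw [← hrange, ← hker]
    exact (Nat.card_congr e.toEquiv).symm
  have h2 : Nat.card N = Nat.card (N.subgroupOf H) :=
    (Nat.card_congr (Subgroup.subgroupOfEquivOfLe hNH).toEquiv).symm
  rw [h1, h2, ← Subgroup.card_eq_card_quotient_mul_card_subgroup]



/-- Let `G` be a finite group with centre `Z`, and `T` an abelian subgroup
with `Z ≤ T` such that: (i) `C_{G/Z}(tZ) ≤ T/Z` for all `t ∈ T \ Z`; (ii) `|T/Z|` is odd and
coprime to `|Z|`; (iii) no element of `G/Z` has order divisible both by a prime dividing
`|T/Z|` and by a prime not dividing `|T/Z|`; (iv) every element of `G/Z` all of whose prime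
divisors of its order divide `|T/Z|` lies in a conjugate of `T/Z`. Then for every `g ∈ T \ Z`
the conjugacy class size `|g^G| = |G : T|` is an isolated vertex of the divisibility graph
`D(G)`: for every non-central `x ∈ G` with `|x^G| ≠ |g^G|`, neither of `|x^G|`, `|g^G|`
divides the other. -/
theorem stmt12 {G : Type*} [Group G] [Finite G] (T : Subgroup G)
    (hab : IsMulCommutative T)
    (hZT : Subgroup.center G ≤ T)
    (hCC : ∀ t ∈ T, t ∉ Subgroup.center G →
      Subgroup.centralizer {((t : G) : G ⧸ Subgroup.center G)}
        ≤ T.map (QuotientGroup.mk' (Subgroup.center G)))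
    (hodd : Odd (Nat.card (T.map (QuotientGroup.mk' (Subgroup.center G)))))
    (hcop : Nat.Coprime (Nat.card (T.map (QuotientGroup.mk' (Subgroup.center G))))
      (Nat.card (Subgroup.center G)))
    (hNoMixed : ∀ x : G ⧸ Subgroup.center G, ∀ a b : ℕ, a.Prime → b.Prime →
      a ∣ Nat.card (T.map (QuotientGroup.mk' (Subgroup.center G))) →
      ¬ b ∣ Nat.card (T.map (QuotientGroup.mk' (Subgroup.center G))) →
      a ∣ orderOf x → ¬ b ∣ orderOf x)
    (hHall : ∀ x : G ⧸ Subgroup.center G,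
      (∀ b : ℕ, b.Prime → b ∣ orderOf x →
        b ∣ Nat.card (T.map (QuotientGroup.mk' (Subgroup.center G)))) →
      ∃ h : G ⧸ Subgroup.center G,
        h⁻¹ * x * h ∈ T.map (QuotientGroup.mk' (Subgroup.center G))) :
    ∀ g ∈ T, g ∉ Subgroup.center G →
      Nat.card {y : G // IsConj g y} = T.index ∧
      ∀ x : G, x ∉ Subgroup.center G →
        Nat.card {y : G // IsConj x y} ≠ Nat.card {y : G // IsConj g y} →
        ¬ Nat.card {y : G // IsConj x y} ∣ Nat.card {y : G // IsConj g y} ∧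
        ¬ Nat.card {y : G // IsConj g y} ∣ Nat.card {y : G // IsConj x y} := by
  set Z := Subgroup.center G with hZ
  set mk : G →* G ⧸ Z := QuotientGroup.mk' Z with hmk
  set Tb := T.map mk with hTb
  set n := Nat.card Tb with hn
  -- Step A: centralizer of any element of T \ Z is T
  have key : ∀ a ∈ T, a ∉ Z → Subgroup.centralizer {a} = T := by
    intro a haT haZ
    apply le_antisymm
    · intro c hc
      have hc' : c * a = a * c := Subgroup.mem_centralizer_singleton_iff.mp hc
      have hcq : (c : G ⧸ Z) ∈ Subgroup.centralizer {((a : G) : G ⧸ Z)} := by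
        rw [Subgroup.mem_centralizer_singleton_iff]
        show ((c : G) : G ⧸ Z) * ((a : G) : G ⧸ Z) = ((a : G) : G ⧸ Z) * ((c : G) : G ⧸ Z)
        rw [← QuotientGroup.mk_mul, ← QuotientGroup.mk_mul, hc']
      have := hCC a haT haZ hcq
      obtain ⟨t, htT, hteq⟩ := Subgroup.mem_map.mp this
      have hz : t⁻¹ * c ∈ Z := by
        rw [← QuotientGroup.eq_one_iff (N := Z)]
        have : (t : G ⧸ Z) = (c : G ⧸ Z) := hteq
        simp [this]
      have : c = t * (t⁻¹ * c) := by group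
      rw [this]
      exact T.mul_mem htT (hZT hz)
    · intro t ht
      rw [Subgroup.mem_centralizer_singleton_iff]
      have := hab.is_comm.comm (⟨t, ht⟩ : T) (⟨a, haT⟩ : T)
      exact congrArg Subtype.val this
  have classcard : ∀ a ∈ T, a ∉ Z → Nat.card {y : G // IsConj a y} = T.index := by
    intro a haT haZ
    rw [card_conjClass_eq', key a haT haZ]
  intro g hg hgZ
  refine ⟨classcard g hg hgZ, ?_⟩
  intro x hx hne
  -- if x is conjugate to an element of T, contradiction with hne
  have hconj : ∀ x' : G, IsConj x x' → x' ∈ T → False := by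
    intro x' hcj hx'T
    have hx'Z : x' ∉ Z := by
      intro hmem
      apply hx
      obtain ⟨c, hc⟩ := isConj_iff.mp hcj
      have : x = c⁻¹ * x' * c := by rw [← hc]; group
      rw [this]
      have hcomm := (Subgroup.mem_center_iff.mp hmem) c⁻¹
      rw [hZ, Subgroup.mem_center_iff]
      intro w
      have : c⁻¹ * x' * c = x' := by
        rw [hcomm, inv_mul_cancel_right]
      rw [this]
      exact Subgroup.mem_center_iff.mp hmem w
    have hsets : {y : G | IsConj x y} = {y : G | IsConj x' y} := by
      ext y
      exact ⟨fun h => hcj.symm.trans h, fun h => hcj.trans h⟩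
    apply hne
    calc Nat.card {y : G // IsConj x y} = Nat.card {y : G // IsConj x' y} := by
          exact Nat.card_congr (Equiv.subtypeEquivRight fun y =>
            ⟨fun h => hcj.symm.trans h, fun h => hcj.trans h⟩)
      _ = T.index := classcard x' hx'T hx'Z
      _ = Nat.card {y : G // IsConj g y} := (classcard g hg hgZ).symm
  -- lifting: if the image of x is conjugate into Tb, contradiction
  have liftmem : ∀ h : G ⧸ Z, h⁻¹ * (x : G ⧸ Z) * h ∈ Tb → False := by
    intro h hmem
    obtain ⟨h₀, rfl⟩ := QuotientGroup.mk'_surjective Z h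
    obtain ⟨t, htT, hteq⟩ := Subgroup.mem_map.mp hmem
    have hteq' : ((t : G) : G ⧸ Z)
        = ((h₀ : G) : G ⧸ Z)⁻¹ * ((x : G) : G ⧸ Z) * ((h₀ : G) : G ⧸ Z) := hteq
    have heq : ((t : G) : G ⧸ Z) = ((h₀⁻¹ * x * h₀ : G) : G ⧸ Z) := by
      rw [hteq', QuotientGroup.mk_mul, QuotientGroup.mk_mul, QuotientGroup.mk_inv]
    have hz : t⁻¹ * (h₀⁻¹ * x * h₀) ∈ Z := QuotientGroup.eq.mp heq
    have hx'T : h₀⁻¹ * x * h₀ ∈ T := by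
      have : h₀⁻¹ * x * h₀ = t * (t⁻¹ * (h₀⁻¹ * x * h₀)) := by group
      rw [this]
      exact T.mul_mem htT (hZT hz)
    exact hconj (h₀⁻¹ * x * h₀) (isConj_iff.mpr ⟨h₀⁻¹, by group⟩) hx'T
  set Cx := Subgroup.centralizer ({x} : Set G) with hCx
  have hZCx : Z ≤ Cx := by
    intro z hz
    rw [hCx, Subgroup.mem_centralizer_singleton_iff]
    exact (Subgroup.mem_center_iff.mp hz x).symm
  have hcardT : n * Nat.card Z = Nat.card T := card_map_mk'' Z T hZT
  have hcardC : Nat.card (Cx.map mk) * Nat.card Z = Nat.card Cx := card_map_mk'' Z Cx hZCx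
  have hZpos : 0 < Nat.card Z := Nat.card_pos
  have hclassx : Nat.card {y : G // IsConj x y} = Cx.index := card_conjClass_eq' x
  rw [hclassx, classcard g hg hgZ]
  constructor
  · -- Cx.index ∣ T.index → False
    intro hd
    obtain ⟨k, hk⟩ := hd
    have hCpos : Cx.index ≠ 0 := Subgroup.index_ne_zero_of_finite
    have hcard : Nat.card Cx = k * Nat.card T := by
      have h1 : Cx.index * Nat.card Cx = Nat.card G := Cx.index_mul_card
      have h2 : T.index * Nat.card T = Nat.card G := T.index_mul_card
      rw [hk] at h2
      apply Nat.eq_of_mul_eq_mul_left (Nat.pos_of_ne_zero hCpos)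
      rw [h1, ← h2]; ring
    have hdvdTC : Nat.card T ∣ Nat.card Cx := ⟨k, by rw [hcard, Nat.mul_comm]⟩
    -- hence n ∣ card (Cx.map mk)
    have hnd : n ∣ Nat.card (Cx.map mk) := by
      have : n * Nat.card Z ∣ Nat.card (Cx.map mk) * Nat.card Z := by
        rw [hcardT, hcardC]; exact hdvdTC
      exact (Nat.mul_dvd_mul_iff_right hZpos).mp this
    -- n ≠ 1
    have hgq : ((g : G) : G ⧸ Z) ∈ Tb := Subgroup.mem_map.mpr ⟨g, hg, rfl⟩
    have hgq1 : ((g : G) : G ⧸ Z) ≠ 1 := by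
      rw [Ne, QuotientGroup.eq_one_iff]; exact hgZ
    have hn1 : n ≠ 1 := by
      intro h1
      have := Tb.orderOf_dvd_natCard hgq
      rw [← hn, h1, Nat.dvd_one, orderOf_eq_one_iff] at this
      exact hgq1 this
    have hn0 : n ≠ 0 := Nat.card_pos.ne'
    set p := n.minFac with hp
    have hpp : p.Prime := Nat.minFac_prime hn1
    have : Fact p.Prime := ⟨hpp⟩
    have hpC : p ∣ Nat.card (Cx.map mk) := dvd_trans (Nat.minFac_dvd n) hnd
    obtain ⟨y, hy⟩ := exists_prime_orderOf_dvd_card' (G := Cx.map mk) p hpC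
    have hyord : orderOf ((y : G ⧸ Z)) = p := by rw [Subgroup.orderOf_coe]; exact hy
    obtain ⟨h, hh⟩ := hHall (y : G ⧸ Z) (by
      intro b hb hbd
      rw [hyord] at hbd
      rw [(Nat.prime_dvd_prime_iff_eq hb hpp).mp hbd]
      exact Nat.minFac_dvd n)
    have hy1 : (y : G ⧸ Z) ≠ 1 := by
      intro h1
      rw [h1, orderOf_one] at hyord
      exact hpp.ne_one hyord.symm
    obtain ⟨t, htT, hteq⟩ := Subgroup.mem_map.mp hh
    have hteq' : ((t : G) : G ⧸ Z) = h⁻¹ * (y : G ⧸ Z) * h := hteq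
    have htZ : t ∉ Z := by
      intro hmem
      have h1 : ((t : G) : G ⧸ Z) = 1 := (QuotientGroup.eq_one_iff t).mpr hmem
      apply hy1
      have h2 : h⁻¹ * (y : G ⧸ Z) * h = 1 := by rw [← hteq']; exact h1
      have h3 : (y : G ⧸ Z) = h * (h⁻¹ * (y : G ⧸ Z) * h) * h⁻¹ := by group
      rw [h2] at h3
      simpa using h3
    -- x̄ commutes with ȳ
    obtain ⟨c, hcC, hceq⟩ := Subgroup.mem_map.mp y.2
    have hcomm : (y : G ⧸ Z) * (x : G ⧸ Z) = (x : G ⧸ Z) * (y : G ⧸ Z) := by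
      rw [← hceq]
      show ((c : G) : G ⧸ Z) * ((x : G) : G ⧸ Z) = ((x : G) : G ⧸ Z) * ((c : G) : G ⧸ Z)
      rw [← QuotientGroup.mk_mul, ← QuotientGroup.mk_mul,
        Subgroup.mem_centralizer_singleton_iff.mp hcC]
    have hxc : h⁻¹ * (x : G ⧸ Z) * h ∈ Subgroup.centralizer {((t : G) : G ⧸ Z)} := by
      rw [Subgroup.mem_centralizer_singleton_iff]
      rw [hteq']
      have e1 : ∀ u v : G ⧸ Z, (h⁻¹ * u * h) * (h⁻¹ * v * h) = h⁻¹ * (u * v) * h := by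
        intro u v; group
      rw [e1, e1, hcomm]
    exact liftmem h (hCC t htT htZ hxc)
  · -- T.index ∣ Cx.index → False
    intro hd
    obtain ⟨k, hk⟩ := hd
    have hTpos : T.index ≠ 0 := Subgroup.index_ne_zero_of_finite
    have hcard : Nat.card T = k * Nat.card Cx := by
      have h1 : Cx.index * Nat.card Cx = Nat.card G := Cx.index_mul_card
      have h2 : T.index * Nat.card T = Nat.card G := T.index_mul_card
      rw [hk] at h1
      apply Nat.eq_of_mul_eq_mul_left (Nat.pos_of_ne_zero hTpos)
      rw [h2, ← h1]; ring
    have hdvdCT : Nat.card Cx ∣ Nat.card T := ⟨k, by rw [hcard, Nat.mul_comm]⟩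
    have hnd : Nat.card (Cx.map mk) ∣ n := by
      have : Nat.card (Cx.map mk) * Nat.card Z ∣ n * Nat.card Z := by
        rw [hcardT, hcardC]; exact hdvdCT
      exact (Nat.mul_dvd_mul_iff_right hZpos).mp this
    have hxC : x ∈ Cx := Subgroup.mem_centralizer_singleton_iff.mpr rfl
    have hxq : ((x : G) : G ⧸ Z) ∈ Cx.map mk := Subgroup.mem_map.mpr ⟨x, hxC, rfl⟩
    have hord : orderOf ((x : G) : G ⧸ Z) ∣ n :=
      dvd_trans ((Cx.map mk).orderOf_dvd_natCard hxq) hnd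
    obtain ⟨h, hh⟩ := hHall ((x : G) : G ⧸ Z) (fun b _ hbd => dvd_trans hbd hord)
    exact liftmem h hh
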